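/- arXiv:2105.02537 — 3 statements merged into one kernel-verified Lean document; each statement's English description precedes it below -/
import Mathlib

section
/- In a weak brace S, for all a, b ∈ S: ρ_b(a) = (λ_a(b))⁻ ∘ a ∘ b, where λ_a(b) = -a + a∘b and ρ_b(a) = (a⁻+b)⁻∘b. -/
/-- A weak (left) brace: `(S,+)` and `(S,∘)` are inverse semigroups (with designated
inverse maps `neg` and `inv`), satisfying `a∘(b+c) = a∘b - a + a∘c` and `a∘a⁻ = -a + a`. -/
structure WeakBrace (S : Type*) where
  add : S → S → S
  mul : S → S → S
  neg : S → S
  inv : S → S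
  add_assoc : ∀ a b c : S, add (add a b) c = add a (add b c)
  mul_assoc : ∀ a b c : S, mul (mul a b) c = mul a (mul b c)
  add_neg_add : ∀ a : S, add (add a (neg a)) a = a
  neg_add_neg : ∀ a : S, add (add (neg a) a) (neg a) = neg a
  neg_unique : ∀ a x : S, add (add a x) a = a → add (add x a) x = x → x = neg a
  mul_inv_mul : ∀ a : S, mul (mul a (inv a)) a = a
  inv_mul_inv : ∀ a : S, mul (mul (inv a) a) (inv a) = inv a
  inv_unique : ∀ a x : S, mul (mul a x) a = a → mul (mul x a) x = x → x = inv a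
  distrib : ∀ a b c : S, mul a (add b c) = add (add (mul a b) (neg a)) (mul a c)
  mul_inv_eq : ∀ a : S, mul a (inv a) = add (neg a) a

/-! ### Generic inverse semigroup layer -/

structure ISg (S : Type*) where
  op : S → S → S
  iv : S → S
  assoc : ∀ a b c : S, op (op a b) c = op a (op b c)
  r1 : ∀ a : S, op (op a (iv a)) a = a
  r2 : ∀ a : S, op (op (iv a) a) (iv a) = iv a
  uniq : ∀ a x : S, op (op a x) a = a → op (op x a) x = x → x = iv a

namespace ISg

variable {S : Type*} (G : ISg S)

local infixl:70 " ⬝ " => G.op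
local prefix:max "ι" => G.iv

theorem iv_iv (a : S) : ι(ι a) = a :=
  (G.uniq (ι a) a (G.r2 a) (G.r1 a)).symm

theorem idem_iv {p : S} (hp : p ⬝ p = p) : ι p = p :=
  (G.uniq p p (by rw [hp, hp]) (by rw [hp, hp])).symm

theorem idem_op {p q : S} (hp : p ⬝ p = p) (hq : q ⬝ q = q) :
    (p ⬝ q) ⬝ (p ⬝ q) = p ⬝ q := by
  have h1 : ((p ⬝ q) ⬝ ι(p ⬝ q)) ⬝ (p ⬝ q) = p ⬝ q := G.r1 (p ⬝ q)
  have h2 : (ι(p ⬝ q) ⬝ (p ⬝ q)) ⬝ ι(p ⬝ q) = ι(p ⬝ q) := G.r2 (p ⬝ q)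
  have c1 : ((p ⬝ q) ⬝ ((q ⬝ ι(p ⬝ q)) ⬝ p)) ⬝ (p ⬝ q) = p ⬝ q := by
    calc ((p ⬝ q) ⬝ ((q ⬝ ι(p ⬝ q)) ⬝ p)) ⬝ (p ⬝ q)
        = ((p ⬝ (q ⬝ q)) ⬝ ι(p ⬝ q)) ⬝ ((p ⬝ p) ⬝ q) := by simp only [G.assoc]
      _ = ((p ⬝ q) ⬝ ι(p ⬝ q)) ⬝ (p ⬝ q) := by
            rw [show p ⬝ (q ⬝ q) = p ⬝ q by rw [hq], hp]
      _ = p ⬝ q := h1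
  have c2 : (((q ⬝ ι(p ⬝ q)) ⬝ p) ⬝ (p ⬝ q)) ⬝ ((q ⬝ ι(p ⬝ q)) ⬝ p)
      = (q ⬝ ι(p ⬝ q)) ⬝ p := by
    calc (((q ⬝ ι(p ⬝ q)) ⬝ p) ⬝ (p ⬝ q)) ⬝ ((q ⬝ ι(p ⬝ q)) ⬝ p)
        = q ⬝ (ι(p ⬝ q) ⬝ ((p ⬝ p) ⬝ ((q ⬝ q) ⬝ (ι(p ⬝ q) ⬝ p)))) := by
            simp only [G.assoc]
      _ = q ⬝ (ι(p ⬝ q) ⬝ (p ⬝ (q ⬝ (ι(p ⬝ q) ⬝ p)))) := by rw [hp, hq]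
      _ = q ⬝ (((ι(p ⬝ q) ⬝ (p ⬝ q)) ⬝ ι(p ⬝ q)) ⬝ p) := by simp only [G.assoc]
      _ = q ⬝ (ι(p ⬝ q) ⬝ p) := by rw [h2]
      _ = (q ⬝ ι(p ⬝ q)) ⬝ p := (G.assoc _ _ _).symm
  have hx : (q ⬝ ι(p ⬝ q)) ⬝ p = ι(p ⬝ q) := G.uniq (p ⬝ q) _ c1 c2
  have hxx : ι(p ⬝ q) ⬝ ι(p ⬝ q) = ι(p ⬝ q) := by
    calc ι(p ⬝ q) ⬝ ι(p ⬝ q)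
        = ((q ⬝ ι(p ⬝ q)) ⬝ p) ⬝ ((q ⬝ ι(p ⬝ q)) ⬝ p) := by rw [hx]
      _ = q ⬝ (((ι(p ⬝ q) ⬝ (p ⬝ q)) ⬝ ι(p ⬝ q)) ⬝ p) := by simp only [G.assoc]
      _ = q ⬝ (ι(p ⬝ q) ⬝ p) := by rw [h2]
      _ = (q ⬝ ι(p ⬝ q)) ⬝ p := (G.assoc _ _ _).symm
      _ = ι(p ⬝ q) := hx
  have hA : p ⬝ q = ι(p ⬝ q) := by
    conv_lhs => rw [← G.iv_iv (p ⬝ q)]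
    rw [G.idem_iv hxx]
  rw [hA]; exact hxx

theorem idem_comm {p q : S} (hp : p ⬝ p = p) (hq : q ⬝ q = q) :
    p ⬝ q = q ⬝ p := by
  have hpq := G.idem_op hp hq
  have hqp := G.idem_op hq hp
  have c1 : ((p ⬝ q) ⬝ (q ⬝ p)) ⬝ (p ⬝ q) = p ⬝ q := by
    calc ((p ⬝ q) ⬝ (q ⬝ p)) ⬝ (p ⬝ q)
        = (p ⬝ (q ⬝ q)) ⬝ ((p ⬝ p) ⬝ q) := by simp only [G.assoc]
      _ = (p ⬝ q) ⬝ (p ⬝ q) := by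
            rw [show p ⬝ (q ⬝ q) = p ⬝ q by rw [hq], hp]
      _ = p ⬝ q := hpq
  have c2 : ((q ⬝ p) ⬝ (p ⬝ q)) ⬝ (q ⬝ p) = q ⬝ p := by
    calc ((q ⬝ p) ⬝ (p ⬝ q)) ⬝ (q ⬝ p)
        = (q ⬝ (p ⬝ p)) ⬝ ((q ⬝ q) ⬝ p) := by simp only [G.assoc]
      _ = (q ⬝ p) ⬝ (q ⬝ p) := by
            rw [show q ⬝ (p ⬝ p) = q ⬝ p by rw [hp], hq]
      _ = q ⬝ p := hqp
  have := G.uniq (p ⬝ q) (q ⬝ p) c1 c2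
  rw [G.idem_iv hpq] at this
  exact this.symm

theorem iv_op (a b : S) : ι(a ⬝ b) = ι b ⬝ ι a := by
  have hP : (b ⬝ ι b) ⬝ (b ⬝ ι b) = b ⬝ ι b := by
    calc (b ⬝ ι b) ⬝ (b ⬝ ι b) = ((b ⬝ ι b) ⬝ b) ⬝ ι b := by simp only [G.assoc]
      _ = b ⬝ ι b := by rw [G.r1]
  have hQ : (ι a ⬝ a) ⬝ (ι a ⬝ a) = ι a ⬝ a := by
    calc (ι a ⬝ a) ⬝ (ι a ⬝ a) = ((ι a ⬝ a) ⬝ ι a) ⬝ a := by simp only [G.assoc]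
      _ = ι a ⬝ a := by rw [G.r2]
  have comm := G.idem_comm hP hQ
  have c1 : ((a ⬝ b) ⬝ (ι b ⬝ ι a)) ⬝ (a ⬝ b) = a ⬝ b := by
    calc ((a ⬝ b) ⬝ (ι b ⬝ ι a)) ⬝ (a ⬝ b)
        = (a ⬝ ((b ⬝ ι b) ⬝ (ι a ⬝ a))) ⬝ b := by simp only [G.assoc]
      _ = (a ⬝ ((ι a ⬝ a) ⬝ (b ⬝ ι b))) ⬝ b := by rw [comm]
      _ = ((a ⬝ ι a) ⬝ a) ⬝ ((b ⬝ ι b) ⬝ b) := by simp only [G.assoc]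
      _ = a ⬝ b := by rw [G.r1, G.r1]
  have c2 : ((ι b ⬝ ι a) ⬝ (a ⬝ b)) ⬝ (ι b ⬝ ι a) = ι b ⬝ ι a := by
    calc ((ι b ⬝ ι a) ⬝ (a ⬝ b)) ⬝ (ι b ⬝ ι a)
        = (ι b ⬝ ((ι a ⬝ a) ⬝ (b ⬝ ι b))) ⬝ ι a := by simp only [G.assoc]
      _ = (ι b ⬝ ((b ⬝ ι b) ⬝ (ι a ⬝ a))) ⬝ ι a := by rw [comm]
      _ = ((ι b ⬝ b) ⬝ ι b) ⬝ ((ι a ⬝ a) ⬝ ι a) := by simp only [G.assoc]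
      _ = ι b ⬝ ι a := by rw [G.r2, G.r2]
  exact (G.uniq (a ⬝ b) (ι b ⬝ ι a) c1 c2).symm

end ISg

/-! ### Brace layer -/

namespace WeakBrace

variable {S : Type*} (W : WeakBrace S)

def addISg : ISg S :=
  ⟨W.add, W.neg, W.add_assoc, W.add_neg_add, W.neg_add_neg, W.neg_unique⟩

def mulISg : ISg S :=
  ⟨W.mul, W.inv, W.mul_assoc, W.mul_inv_mul, W.inv_mul_inv, W.inv_unique⟩

local infixl:65 " ⊹ " => W.add
local infixl:70 " ⬝ " => W.mul
local prefix:max "∼" => W.neg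
local postfix:max "ⁱ" => W.inv

theorem neg_neg (a : S) : ∼(∼a) = a := W.addISg.iv_iv a

theorem inv_inv (a : S) : (aⁱ)ⁱ = a := W.mulISg.iv_iv a

theorem neg_add (a b : S) : ∼(a ⊹ b) = ∼b ⊹ ∼a := W.addISg.iv_op a b

theorem inv_mul (a b : S) : (a ⬝ b)ⁱ = bⁱ ⬝ aⁱ := W.mulISg.iv_op a b

/-- Lemma A: `-(a∘b) = (-a + a∘(-b)) + -a`. -/
theorem neg_mul (a b : S) : ∼(a ⬝ b) = (∼a ⊹ a ⬝ ∼b) ⊹ ∼a := by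
  have c1 : ((a ⬝ b) ⊹ ((∼a ⊹ a ⬝ ∼b) ⊹ ∼a)) ⊹ (a ⬝ b) = a ⬝ b := by
    calc ((a ⬝ b) ⊹ ((∼a ⊹ a ⬝ ∼b) ⊹ ∼a)) ⊹ (a ⬝ b)
        = ((a ⬝ b ⊹ ∼a) ⊹ a ⬝ ∼b) ⊹ (∼a ⊹ a ⬝ b) := by simp only [W.add_assoc]
      _ = (a ⬝ (b ⊹ ∼b)) ⊹ (∼a ⊹ a ⬝ b) := by rw [← W.distrib]
      _ = ((a ⬝ (b ⊹ ∼b)) ⊹ ∼a) ⊹ a ⬝ b := by simp only [W.add_assoc]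
      _ = a ⬝ ((b ⊹ ∼b) ⊹ b) := by rw [← W.distrib]
      _ = a ⬝ b := by rw [W.add_neg_add]
  have c2 : (((∼a ⊹ a ⬝ ∼b) ⊹ ∼a) ⊹ (a ⬝ b)) ⊹ ((∼a ⊹ a ⬝ ∼b) ⊹ ∼a)
      = (∼a ⊹ a ⬝ ∼b) ⊹ ∼a := by
    calc (((∼a ⊹ a ⬝ ∼b) ⊹ ∼a) ⊹ (a ⬝ b)) ⊹ ((∼a ⊹ a ⬝ ∼b) ⊹ ∼a)
        = ∼a ⊹ (((a ⬝ ∼b ⊹ ∼a) ⊹ a ⬝ b) ⊹ (∼a ⊹ (a ⬝ ∼b ⊹ ∼a))) := by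
            simp only [W.add_assoc]
      _ = ∼a ⊹ ((a ⬝ (∼b ⊹ b)) ⊹ (∼a ⊹ (a ⬝ ∼b ⊹ ∼a))) := by rw [← W.distrib]
      _ = ∼a ⊹ (((a ⬝ (∼b ⊹ b) ⊹ ∼a) ⊹ a ⬝ ∼b) ⊹ ∼a) := by
            simp only [W.add_assoc]
      _ = ∼a ⊹ ((a ⬝ ((∼b ⊹ b) ⊹ ∼b)) ⊹ ∼a) := by rw [← W.distrib]
      _ = ∼a ⊹ (a ⬝ ∼b ⊹ ∼a) := by rw [W.neg_add_neg]
      _ = (∼a ⊹ a ⬝ ∼b) ⊹ ∼a := by simp only [W.add_assoc]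
  exact (W.neg_unique (a ⬝ b) _ c1 c2).symm

/-- Claim C: `(a + -a) + a∘b = a∘b`. -/
theorem absorb_left (a b : S) : (a ⊹ ∼a) ⊹ a ⬝ b = a ⬝ b := by
  have h : ∼(a ⬝ b) ⊹ (a ⊹ ∼a) = ∼(a ⬝ b) := by
    rw [W.neg_mul]
    calc ((∼a ⊹ a ⬝ ∼b) ⊹ ∼a) ⊹ (a ⊹ ∼a)
        = (∼a ⊹ a ⬝ ∼b) ⊹ ((∼a ⊹ a) ⊹ ∼a) := by simp only [W.add_assoc]
      _ = (∼a ⊹ a ⬝ ∼b) ⊹ ∼a := by rw [W.neg_add_neg]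
  have h2 := congrArg W.neg h
  rw [W.neg_add, W.neg_add, W.neg_neg, W.neg_neg] at h2
  exact h2

/-- Claim C'': `a∘b + (-a + a) = a∘b`. -/
theorem absorb_right (a b : S) : a ⬝ b ⊹ (∼a ⊹ a) = a ⬝ b := by
  have h : (∼a ⊹ a) ⊹ ∼(a ⬝ b) = ∼(a ⬝ b) := by
    rw [W.neg_mul]
    calc (∼a ⊹ a) ⊹ ((∼a ⊹ a ⬝ ∼b) ⊹ ∼a)
        = (((∼a ⊹ a) ⊹ ∼a) ⊹ a ⬝ ∼b) ⊹ ∼a := by simp only [W.add_assoc]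
      _ = (∼a ⊹ a ⬝ ∼b) ⊹ ∼a := by rw [W.neg_add_neg]
  have h2 := congrArg W.neg h
  rw [W.neg_add, W.neg_add, W.neg_neg, W.neg_neg] at h2
  exact h2

/-- `a + -a = -a + a`. -/
theorem add_neg_comm (a : S) : a ⊹ ∼a = ∼a ⊹ a := by
  have h1 : (a ⊹ ∼a) ⊹ (∼a ⊹ a) = ∼a ⊹ a := by
    have h := W.absorb_left a (aⁱ); rw [W.mul_inv_eq] at h; exact h
  have h3 : (∼a ⊹ a) ⊹ (a ⊹ ∼a) = a ⊹ ∼a := by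
    have h := W.absorb_left (∼a) ((∼a)ⁱ)
    rw [W.mul_inv_eq (∼a), W.neg_neg] at h
    exact h
  have h2 : (∼a ⊹ a) ⊹ (a ⊹ ∼a) = ∼a ⊹ a := by
    have h := congrArg W.neg h1
    rw [W.neg_add, W.neg_add, W.neg_add, W.neg_neg] at h
    exact h
  exact h3.symm.trans h2

section Idem

variable {p q : S}

theorem idem_neg (hp : p ⊹ p = p) : ∼p = p := W.addISg.idem_iv hp

theorem idem_mul_inv (hp : p ⊹ p = p) : p ⬝ pⁱ = p := by
  rw [W.mul_inv_eq, W.idem_neg hp, hp]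

theorem idem_mul (hp : p ⊹ p = p) : p ⬝ p = p := by
  have h := W.mul_inv_mul p
  rw [W.idem_mul_inv hp] at h
  exact h

theorem idem_inv (hp : p ⊹ p = p) : pⁱ = p :=
  W.mulISg.idem_iv (W.idem_mul hp)

theorem idem_absorb_right (hp : p ⊹ p = p) (u : S) : p ⬝ u ⊹ p = p ⬝ u := by
  have h := W.absorb_right p u
  rw [W.idem_neg hp, hp] at h
  exact h

theorem idem_absorb_left (hp : p ⊹ p = p) (u : S) : p ⊹ p ⬝ u = p ⬝ u := by
  have h := W.absorb_left p u
  rw [W.idem_neg hp, hp] at h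
  exact h

theorem idem_hom (hp : p ⊹ p = p) (u v : S) :
    p ⬝ (u ⊹ v) = p ⬝ u ⊹ p ⬝ v := by
  rw [W.distrib, W.idem_neg hp, W.idem_absorb_right hp]

theorem idem_sum (hp : p ⊹ p = p) (hq : q ⊹ q = q) :
    (p ⊹ q) ⊹ (p ⊹ q) = p ⊹ q := W.addISg.idem_op hp hq

theorem mul_idem_comm {u v : S} (hu : u ⬝ u = u) (hv : v ⬝ v = v) :
    u ⬝ v = v ⬝ u := W.mulISg.idem_comm hu hv

/-- For additive idempotents, `p∘q = p + q`. -/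
theorem idem_mul_eq_add (hp : p ⊹ p = p) (hq : q ⊹ q = q) :
    p ⬝ q = p ⊹ q := by
  have hz : (p ⊹ q) ⊹ (p ⊹ q) = p ⊹ q := W.idem_sum hp hq
  have t2 : p ⬝ (p ⊹ q) = p ⬝ q := by
    rw [W.idem_hom hp, W.idem_mul hp, W.idem_absorb_left hp]
  have t1 : (p ⊹ q) ⬝ p = p ⬝ q := by
    rw [W.mul_idem_comm (W.idem_mul hz) (W.idem_mul hp)]
    exact t2
  have t3 : q ⬝ (p ⊹ q) = p ⬝ q := by
    rw [W.idem_hom hq, W.idem_mul hq, W.idem_absorb_right hq,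
      W.mul_idem_comm (W.idem_mul hq) (W.idem_mul hp)]
  have t4 : (p ⊹ q) ⬝ q = p ⬝ q := by
    rw [W.mul_idem_comm (W.idem_mul hz) (W.idem_mul hq)]
    exact t3
  have t5 : p ⊹ q = p ⬝ q ⊹ p ⬝ q := by
    calc p ⊹ q = (p ⊹ q) ⬝ (p ⊹ q) := (W.idem_mul hz).symm
      _ = (p ⊹ q) ⬝ p ⊹ (p ⊹ q) ⬝ q := W.idem_hom hz p q
      _ = p ⬝ q ⊹ p ⬝ q := by rw [t1, t4]
  have t6 : p ⬝ q ⊹ p ⬝ q = p ⬝ q := by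
    rw [← W.idem_hom hp, hq]
  exact (t5.trans t6).symm

/-- For an additive idempotent `e`, `e∘b = b + e`. -/
theorem idem_mul_arg (he : p ⊹ p = p) (b : S) : p ⬝ b = b ⊹ p := by
  have hgb : (∼b ⊹ b) ⊹ (∼b ⊹ b) = ∼b ⊹ b := by
    calc (∼b ⊹ b) ⊹ (∼b ⊹ b) = ∼b ⊹ ((b ⊹ ∼b) ⊹ b) := by simp only [W.add_assoc]
      _ = ∼b ⊹ b := by rw [W.add_neg_add]
  have comm2 : (∼b ⊹ b) ⊹ p = p ⊹ (∼b ⊹ b) := W.addISg.idem_comm hgb he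
  have hP : (p ⊹ (∼b ⊹ b)) ⊹ (p ⊹ (∼b ⊹ b)) = p ⊹ (∼b ⊹ b) :=
    W.idem_sum he hgb
  have key2 : (b ⊹ p) ⬝ (b ⊹ p)ⁱ = p ⊹ (∼b ⊹ b) := by
    rw [W.mul_inv_eq, W.neg_add, W.idem_neg he]
    calc (p ⊹ ∼b) ⊹ (b ⊹ p) = p ⊹ ((∼b ⊹ b) ⊹ p) := by simp only [W.add_assoc]
      _ = p ⊹ (p ⊹ (∼b ⊹ b)) := by rw [comm2]
      _ = (p ⊹ p) ⊹ (∼b ⊹ b) := (W.add_assoc _ _ _).symm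
      _ = p ⊹ (∼b ⊹ b) := by rw [he]
  have key3 : (p ⊹ (∼b ⊹ b)) ⬝ (b ⊹ p) = b ⊹ p := by
    have h := W.mul_inv_mul (b ⊹ p)
    rw [key2] at h
    exact h
  have key5 : (p ⊹ (∼b ⊹ b)) ⬝ p = p ⊹ (∼b ⊹ b) := by
    rw [W.idem_mul_eq_add hP he]
    calc (p ⊹ (∼b ⊹ b)) ⊹ p = p ⊹ ((∼b ⊹ b) ⊹ p) := by simp only [W.add_assoc]
      _ = p ⊹ (p ⊹ (∼b ⊹ b)) := by rw [comm2]
      _ = (p ⊹ p) ⊹ (∼b ⊹ b) := (W.add_assoc _ _ _).symm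
      _ = p ⊹ (∼b ⊹ b) := by rw [he]
  have key7 : (p ⊹ (∼b ⊹ b)) ⬝ b = b ⊹ p := by
    have h4 : (p ⊹ (∼b ⊹ b)) ⬝ (b ⊹ p)
        = (p ⊹ (∼b ⊹ b)) ⬝ b ⊹ (p ⊹ (∼b ⊹ b)) := by
      rw [W.idem_hom hP, key5]
    have h5 : (p ⊹ (∼b ⊹ b)) ⬝ b ⊹ (p ⊹ (∼b ⊹ b)) = b ⊹ p :=
      h4.symm.trans key3
    have h6 := W.idem_absorb_right hP b
    exact h6.symm.trans h5
  have key8 : p ⬝ (p ⊹ (∼b ⊹ b)) = p ⊹ (∼b ⊹ b) := by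
    rw [W.idem_mul_eq_add he hP, ← W.add_assoc, he]
  have key10 : p ⬝ (b ⊹ p) = b ⊹ p := by
    rw [← key7, ← W.mul_assoc, key8, key7]
  have key9 : p ⬝ (b ⊹ p) = p ⬝ b ⊹ p := by
    rw [W.idem_hom he, W.idem_mul he]
  have key11 : p ⬝ b ⊹ p = b ⊹ p := key9.symm.trans key10
  exact (W.idem_absorb_right he b).symm.trans key11

/-- Additive idempotents are central. -/
theorem idem_central (he : p ⊹ p = p) (x : S) : p ⊹ x = x ⊹ p := by
  have Y1 : ∀ y : S, p ⊹ (y ⊹ p) = y ⊹ p := by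
    intro y
    have h := W.idem_absorb_left he y
    rw [W.idem_mul_arg he y] at h
    exact h
  have Y2 := Y1 (∼x)
  have h := congrArg W.neg Y2
  rw [W.neg_add, W.neg_add, W.neg_neg, W.idem_neg he] at h
  -- h : (p ⊹ x) ⊹ p = p ⊹ x
  have h2 : (p ⊹ x) ⊹ p = x ⊹ p := by
    rw [W.add_assoc]; exact Y1 x
  exact h.symm.trans h2

end Idem

end WeakBrace

theorem weakBrace_rho_formula {S : Type*} (W : WeakBrace S) :
    ∀ a b : S, W.mul (W.inv (W.add (W.inv a) b)) b
      = W.mul (W.mul (W.inv (W.add (W.neg a) (W.mul a b))) a) b := by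
  intro a b
  -- e := a⁻ ∘ a is an additive idempotent
  have he2 : W.mul (W.inv a) a = W.add (W.neg (W.inv a)) (W.inv a) := by
    have h := W.mul_inv_eq (W.inv a)
    rw [W.inv_inv] at h
    exact h
  have he : W.add (W.mul (W.inv a) a) (W.mul (W.inv a) a) = W.mul (W.inv a) a := by
    rw [he2]
    calc W.add (W.add (W.neg (W.inv a)) (W.inv a)) (W.add (W.neg (W.inv a)) (W.inv a))
        = W.add (W.neg (W.inv a))
            (W.add (W.add (W.inv a) (W.neg (W.inv a))) (W.inv a)) := by
          simp only [W.add_assoc]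
      _ = W.add (W.neg (W.inv a)) (W.inv a) := by rw [W.add_neg_add]
  -- step 2 : e ∘ c = c  where c := a⁻ + b
  have step2 : W.mul (W.mul (W.inv a) a) (W.add (W.inv a) b) = W.add (W.inv a) b := by
    rw [W.idem_mul_arg he, ← W.idem_central he]
    calc W.add (W.mul (W.inv a) a) (W.add (W.inv a) b)
        = W.add (W.add (W.mul (W.inv a) a) (W.inv a)) b := (W.add_assoc _ _ _).symm
      _ = W.add (W.add (W.inv a) (W.mul (W.inv a) a)) b := by
          rw [W.idem_central he]
      _ = W.add (W.add (W.add (W.inv a) (W.neg (W.inv a))) (W.inv a)) b := by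
          rw [he2, ← W.add_assoc]
      _ = W.add (W.inv a) b := by rw [W.add_neg_add]
  -- step 3 : c⁻ ∘ e = c⁻
  have step3 : W.mul (W.inv (W.add (W.inv a) b)) (W.mul (W.inv a) a)
      = W.inv (W.add (W.inv a) b) := by
    have h := congrArg W.inv step2
    rw [W.inv_mul, W.idem_inv he] at h
    exact h
  -- step 1 : -a + a∘b = a ∘ (a⁻ + b)
  have step1 : W.add (W.neg a) (W.mul a b) = W.mul a (W.add (W.inv a) b) := by
    rw [W.distrib, W.mul_inv_eq, W.neg_add_neg]
  -- finish
  rw [step1, W.inv_mul, W.mul_assoc (W.inv (W.add (W.inv a) b)) (W.inv a) a, step3]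
end

section
/- In a weak brace S, the map ρ : S → T_S, b ↦ ρ_b, with ρ_b(a) = (a⁻+b)⁻∘b, is an anti-homomorphism from (S,∘) into the full transformation monoid on S; that is, ρ_{b∘c} = ρ_c ∘ ρ_b for all b, c ∈ S. -/
namespace WeakBrace
variable {S : Type*} (W : WeakBrace S)

local infixl:65 " +' " => W.add
local infixl:70 " *' " => W.mul
local prefix:100 "-'" => W.neg
local postfix:101 "ᵀ" => W.inv

lemma nn (a : S) : -'(-'a) = a := by
  exact (W.neg_unique (-'a) a (W.neg_add_neg a) (W.add_neg_add a)).symm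

lemma ii (a : S) : (aᵀ)ᵀ = a := by
  exact (W.inv_unique (aᵀ) a (W.inv_mul_inv a) (W.mul_inv_mul a)).symm

lemma idem_neg_s11 {e : S} (h : e +' e = e) : -'e = e := by
  have := W.neg_unique e e (by rw [h, h]) (by rw [h, h])
  exact this.symm

lemma idem_inv_s11 {e : S} (h : e *' e = e) : eᵀ = e := by
  have := W.inv_unique e e (by rw [h, h]) (by rw [h, h])
  exact this.symm



lemma aabs {e : S} (h : e +' e = e) (z : S) : e +' (e +' z) = e +' z := by
  rw [← W.add_assoc, h]

lemma mabs {e : S} (h : e *' e = e) (z : S) : e *' (e *' z) = e *' z := by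
  rw [← W.mul_assoc, h]

lemma add_idem_closed {e f : S} (he : e +' e = e) (hf : f +' f = f) :
    (e +' f) +' (e +' f) = e +' f := by
  generalize hxdef : -'(e +' f) = x
  have h2 : x +' (e +' (f +' x)) = x := by
    have := W.neg_add_neg (e +' f); rw [hxdef] at this
    simp only [W.add_assoc] at this; exact this
  have key : x +' (e +' (f +' (x +' e))) = x +' e := by
    have k1 : x +' (e +' (f +' (x +' e))) = (x +' (e +' (f +' x))) +' e := by
      simp only [W.add_assoc]
    rw [k1, h2]
  have cond1 : ((e +' f) +' (f +' (x +' e))) +' (e +' f) = e +' f := by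
    simp only [W.add_assoc]
    rw [W.aabs hf, W.aabs he]
    have := W.add_neg_add (e +' f); rw [hxdef] at this
    simp only [W.add_assoc] at this; exact this
  have cond2 : ((f +' (x +' e)) +' (e +' f)) +' (f +' (x +' e)) = f +' (x +' e) := by
    simp only [W.add_assoc]
    rw [W.aabs he, W.aabs hf, key]
  have hyx : f +' (x +' e) = x := by
    have := W.neg_unique (e +' f) _ cond1 cond2; rw [hxdef] at this; exact this
  have hxx : x +' x = x := by
    rw [← hyx]; simp only [W.add_assoc]; rw [key]
  have hef : e +' f = x := by
    have h3 : e +' f = -'x := by rw [← hxdef, W.nn]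
    rw [h3, W.idem_neg_s11 hxx]
  rw [hef, hxx]

lemma add_idem_comm {e f : S} (he : e +' e = e) (hf : f +' f = f) :
    f +' e = e +' f := by
  have closed := W.add_idem_closed he hf
  have closed' := W.add_idem_closed hf he
  have c1 : ((e +' f) +' (f +' e)) +' (e +' f) = e +' f := by
    simp only [W.add_assoc]
    rw [W.aabs hf, W.aabs he]
    simp only [W.add_assoc] at closed; exact closed
  have c2 : ((f +' e) +' (e +' f)) +' (f +' e) = f +' e := by
    simp only [W.add_assoc]
    rw [W.aabs he, W.aabs hf]
    simp only [W.add_assoc] at closed'; exact closed'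
  have h := W.neg_unique (e +' f) _ c1 c2
  rw [h]
  have h3 : e +' f = -'(-'(e +' f)) := (W.nn _).symm
  rw [show -'(e +' f) = e +' f from W.idem_neg_s11 closed]

lemma mul_idem_closed {e f : S} (he : e *' e = e) (hf : f *' f = f) :
    (e *' f) *' (e *' f) = e *' f := by
  generalize hxdef : (e *' f)ᵀ = x
  have h2 : x *' (e *' (f *' x)) = x := by
    have := W.inv_mul_inv (e *' f); rw [hxdef] at this
    simp only [W.mul_assoc] at this; exact this
  have key : x *' (e *' (f *' (x *' e))) = x *' e := by
    have k1 : x *' (e *' (f *' (x *' e))) = (x *' (e *' (f *' x))) *' e := by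
      simp only [W.mul_assoc]
    rw [k1, h2]
  have cond1 : ((e *' f) *' (f *' (x *' e))) *' (e *' f) = e *' f := by
    simp only [W.mul_assoc]
    rw [W.mabs hf, W.mabs he]
    have := W.mul_inv_mul (e *' f); rw [hxdef] at this
    simp only [W.mul_assoc] at this; exact this
  have cond2 : ((f *' (x *' e)) *' (e *' f)) *' (f *' (x *' e)) = f *' (x *' e) := by
    simp only [W.mul_assoc]
    rw [W.mabs he, W.mabs hf, key]
  have hyx : f *' (x *' e) = x := by
    have := W.inv_unique (e *' f) _ cond1 cond2; rw [hxdef] at this; exact this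
  have hxx : x *' x = x := by
    rw [← hyx]; simp only [W.mul_assoc]; rw [key]
  have hef : e *' f = x := by
    have h3 : e *' f = xᵀ := by rw [← hxdef, W.ii]
    rw [h3, W.idem_inv_s11 hxx]
  rw [hef, hxx]

lemma mul_idem_comm_s11 {e f : S} (he : e *' e = e) (hf : f *' f = f) :
    f *' e = e *' f := by
  have closed := W.mul_idem_closed he hf
  have closed' := W.mul_idem_closed hf he
  have c1 : ((e *' f) *' (f *' e)) *' (e *' f) = e *' f := by
    simp only [W.mul_assoc]
    rw [W.mabs hf, W.mabs he]
    simp only [W.mul_assoc] at closed; exact closed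
  have c2 : ((f *' e) *' (e *' f)) *' (f *' e) = f *' e := by
    simp only [W.mul_assoc]
    rw [W.mabs he, W.mabs hf]
    simp only [W.mul_assoc] at closed'; exact closed'
  have h := W.inv_unique (e *' f) _ c1 c2
  rw [h]
  have h3 : e *' f = ((e *' f)ᵀ)ᵀ := (W.ii _).symm
  rw [show (e *' f)ᵀ = e *' f from W.idem_inv_s11 closed]

lemma gidem (a : S) : (-'a +' a) +' (-'a +' a) = -'a +' a := by
  simp only [W.add_assoc]
  rw [← W.add_assoc a (-'a) a, W.add_neg_add a]

lemma gidem' (a : S) : (a +' -'a) +' (a +' -'a) = a +' -'a := by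
  simp only [W.add_assoc]
  rw [← W.add_assoc (-'a) a (-'a), W.neg_add_neg a]

lemma hidem (a : S) : (aᵀ *' a) *' (aᵀ *' a) = aᵀ *' a := by
  simp only [W.mul_assoc]
  rw [← W.mul_assoc a (aᵀ) a, W.mul_inv_mul a]

lemma hidem' (a : S) : (a *' aᵀ) *' (a *' aᵀ) = a *' aᵀ := by
  simp only [W.mul_assoc]
  rw [← W.mul_assoc (aᵀ) a (aᵀ), W.inv_mul_inv a]

lemma neg_add_s11 (a b : S) : -'(a +' b) = -'b +' -'a := by
  have cond1 : ((a +' b) +' (-'b +' -'a)) +' (a +' b) = a +' b := by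
    simp only [W.add_assoc]
    rw [← W.add_assoc (-'a) a b, ← W.add_assoc (-'b) (-'a +' a) b,
        ← W.add_assoc b (-'b +' (-'a +' a)) b, ← W.add_assoc b (-'b) (-'a +' a),
        W.add_idem_comm (W.gidem a) (W.gidem' b),
        W.add_assoc (-'a +' a) (b +' -'b) b, W.add_neg_add b,
        W.add_assoc (-'a) a b, ← W.add_assoc a (-'a) (a +' b),
        ← W.add_assoc (a +' -'a) a b, W.add_neg_add a]
  have cond2 : ((-'b +' -'a) +' (a +' b)) +' (-'b +' -'a) = -'b +' -'a := by
    simp only [W.add_assoc]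
    rw [← W.add_assoc a b (-'b +' -'a), ← W.add_assoc (a +' b) (-'b) (-'a),
        W.add_assoc a b (-'b), ← W.add_assoc (-'a) (a +' (b +' -'b)) (-'a),
        ← W.add_assoc (-'a) a (b +' -'b),
        W.add_idem_comm (W.gidem' b) (W.gidem a),
        W.add_assoc (b +' -'b) (-'a +' a) (-'a), W.neg_add_neg a,
        ← W.add_assoc (-'b) (b +' -'b) (-'a),
        ← W.add_assoc (-'b) b (-'b), W.neg_add_neg b]
  exact (W.neg_unique (a +' b) _ cond1 cond2).symm

lemma inv_mul_s11 (a b : S) : (a *' b)ᵀ = bᵀ *' aᵀ := by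
  have cond1 : ((a *' b) *' (bᵀ *' aᵀ)) *' (a *' b) = a *' b := by
    simp only [W.mul_assoc]
    rw [← W.mul_assoc (aᵀ) a b, ← W.mul_assoc (bᵀ) (aᵀ *' a) b,
        ← W.mul_assoc b (bᵀ *' (aᵀ *' a)) b, ← W.mul_assoc b (bᵀ) (aᵀ *' a),
        W.mul_idem_comm_s11 (W.hidem a) (W.hidem' b),
        W.mul_assoc (aᵀ *' a) (b *' bᵀ) b, W.mul_inv_mul b,
        W.mul_assoc (aᵀ) a b, ← W.mul_assoc a (aᵀ) (a *' b),
        ← W.mul_assoc (a *' aᵀ) a b, W.mul_inv_mul a]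
  have cond2 : ((bᵀ *' aᵀ) *' (a *' b)) *' (bᵀ *' aᵀ) = bᵀ *' aᵀ := by
    simp only [W.mul_assoc]
    rw [← W.mul_assoc a b (bᵀ *' aᵀ), ← W.mul_assoc (a *' b) (bᵀ) (aᵀ),
        W.mul_assoc a b (bᵀ), ← W.mul_assoc (aᵀ) (a *' (b *' bᵀ)) (aᵀ),
        ← W.mul_assoc (aᵀ) a (b *' bᵀ),
        W.mul_idem_comm_s11 (W.hidem' b) (W.hidem a),
        W.mul_assoc (b *' bᵀ) (aᵀ *' a) (aᵀ), W.inv_mul_inv a,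
        ← W.mul_assoc (bᵀ) (b *' bᵀ) (aᵀ),
        ← W.mul_assoc (bᵀ) b (bᵀ), W.inv_mul_inv b]
  exact (W.inv_unique (a *' b) _ cond1 cond2).symm

lemma ana (a : S) : a +' (-'a +' a) = a := by
  rw [← W.add_assoc]; exact W.add_neg_add a

lemma nan (a : S) : -'a +' (a +' -'a) = -'a := by
  rw [← W.add_assoc]; exact W.neg_add_neg a

lemma mim (a : S) : a *' (aᵀ *' a) = a := by
  rw [← W.mul_assoc]; exact W.mul_inv_mul a

lemma B1 (a c : S) : a *' (aᵀ +' c) = -'a +' a *' c := by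
  rw [W.distrib, W.mul_inv_eq, W.neg_add_neg]

lemma B4 (a c : S) : -'(a *' c) = -'a +' (a *' -'c +' -'a) := by
  have cond1 : ((a *' c) +' (-'a +' (a *' -'c +' -'a))) +' (a *' c) = a *' c := by
    have h : a *' ((c +' -'c) +' c) = a *' c := by rw [W.add_neg_add c]
    rw [W.distrib a (c +' -'c) c, W.distrib a c (-'c)] at h
    simp only [W.add_assoc] at h ⊢
    exact h
  have cond2 : ((-'a +' (a *' -'c +' -'a)) +' (a *' c)) +' (-'a +' (a *' -'c +' -'a))
      = -'a +' (a *' -'c +' -'a) := by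
    have h2 : a *' ((-'c +' c) +' -'c) = a *' -'c := by rw [W.neg_add_neg c]
    rw [W.distrib a (-'c +' c) (-'c), W.distrib a (-'c) c] at h2
    have h2' := congrArg (fun z => z +' -'a) h2
    simp only [W.add_assoc] at h2' ⊢
    rw [h2']
  exact (W.neg_unique (a *' c) _ cond1 cond2).symm

lemma B5 (a c : S) : a *' c = a +' (-'a +' (a *' c +' (-'a +' a))) := by
  conv_lhs => rw [← W.nn (a *' c)]
  rw [W.B4 a c, W.neg_add_s11, W.neg_add_s11, W.nn, W.B4 a (-'c), W.nn]
  simp only [W.add_assoc]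

lemma B5L (a c : S) : a +' (-'a +' a *' c) = a *' c := by
  conv_lhs => rw [W.B5 a c]
  rw [← W.add_assoc (-'a) a (-'a +' (a *' c +' (-'a +' a))),
      ← W.add_assoc a (-'a +' a) (-'a +' (a *' c +' (-'a +' a))),
      ← W.add_assoc a (-'a) a, W.add_neg_add a, ← W.B5 a c]

lemma B5R (a c : S) : a *' c +' (-'a +' a) = a *' c := by
  conv_lhs => rw [W.B5 a c]
  simp only [W.add_assoc]
  rw [← W.add_assoc a (-'a) a, W.add_neg_add a]
  exact (W.B5 a c).symm

lemma X1 (b : S) : -'b +' b = (b +' -'b) +' (-'b +' b) := by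
  have h := W.B5 b (bᵀ)
  rw [W.mul_inv_eq b, W.gidem b, ← W.add_assoc b (-'b) (-'b +' b)] at h
  exact h

lemma T4 (b : S) : b +' -'b = -'b +' b := by
  have hX1 := W.X1 b
  have hX2 : b +' -'b = (-'b +' b) +' (b +' -'b) := by
    have h := W.X1 (-'b)
    rw [W.nn] at h
    exact h
  calc b +' -'b = (-'b +' b) +' (b +' -'b) := hX2
    _ = (b +' -'b) +' (-'b +' b) := (W.add_idem_comm (W.gidem b) (W.gidem' b)).symm
    _ = -'b +' b := hX1.symm

lemma addIdem_of_mulIdem {e : S} (he : e *' e = e) : e +' e = e := by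
  have einv : eᵀ = e := W.idem_inv_s11 he
  have hW' : e = -'e +' e := by
    have h := W.mul_inv_eq e; rw [einv, he] at h; exact h
  have h2 : e +' e = e := by
    conv_lhs => rw [hW']
    rw [W.gidem e]; exact hW'.symm
  exact h2

lemma negIdem_of_mulIdem {e : S} (he : e *' e = e) : -'e = e :=
  W.idem_neg_s11 (W.addIdem_of_mulIdem he)

lemma mulIdem_of_addIdem {e : S} (he : e +' e = e) : e *' e = e := by
  have negE : -'e = e := W.idem_neg_s11 he
  have hWe : e *' eᵀ = e := by rw [W.mul_inv_eq, negE, he]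
  have h := W.mul_inv_mul e
  rw [hWe] at h
  exact h

lemma W3 {e : S} (he : e *' e = e) (y : S) : y *' (e *' yᵀ) = -'y +' y *' e := by
  have einv : eᵀ = e := W.idem_inv_s11 he
  have negE : -'e = e := W.negIdem_of_mulIdem he
  have hadd : e +' e = e := W.addIdem_of_mulIdem he
  have h := W.mul_inv_eq (y *' e)
  rw [W.inv_mul_s11 y e, einv, W.mul_assoc y e (e *' yᵀ), ← W.mul_assoc e e (yᵀ), he,
      W.B4 y e, negE, W.add_assoc (-'y) (y *' e +' -'y) (y *' e),
      ← W.distrib y e e, hadd] at h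
  exact h

lemma conj_idem {e : S} (he : e *' e = e) (y : S) :
    (y *' (e *' yᵀ)) *' (y *' (e *' yᵀ)) = y *' (e *' yᵀ) := by
  -- y∘(e∘(yᵀ∘(y∘(e∘yᵀ)))) = y∘(e∘yᵀ)
  simp only [W.mul_assoc]
  rw [← W.mul_assoc (yᵀ) y (e *' yᵀ), ← W.mul_assoc e (yᵀ *' y) (e *' yᵀ),
      ← W.mul_idem_comm_s11 he (W.hidem y), W.mul_assoc (yᵀ *' y) e (e *' yᵀ),
      W.mabs he (yᵀ), ← W.mul_assoc y (yᵀ *' y) (e *' yᵀ), W.mim y]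

lemma B6 {e : S} (he : e *' e = e) (c : S) : e +' e *' c = e *' c := by
  have negE : -'e = e := W.negIdem_of_mulIdem he
  have hadd : e +' e = e := W.addIdem_of_mulIdem he
  have h := W.B5L e c
  rw [negE, W.aabs hadd] at h
  exact h

lemma B6R {e : S} (he : e *' e = e) (c : S) : e *' c +' e = e *' c := by
  have negE : -'e = e := W.negIdem_of_mulIdem he
  have hadd : e +' e = e := W.addIdem_of_mulIdem he
  have h := W.B5R e c
  rw [negE, hadd] at h
  exact h

lemma S1 (c d : S) : c +' c *' (cᵀ +' d) = c *' d := by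
  rw [W.B1, W.B5L]

lemma S3 {e : S} (he : e *' e = e) (c : S) : e *' c = c +' (c *' cᵀ) *' e := by
  have hk : (cᵀ *' (e *' c)) *' (cᵀ *' (e *' c)) = cᵀ *' (e *' c) := by
    have h := W.conj_idem he (cᵀ)
    rw [W.ii] at h
    exact h
  have hck : c *' (cᵀ *' (e *' c)) = e *' c := by
    rw [← W.mul_assoc c (cᵀ) (e *' c), ← W.mul_assoc (c *' cᵀ) e c,
        W.mul_idem_comm_s11 he (W.hidem' c), W.mul_assoc e (c *' cᵀ) c, W.mul_inv_mul c]
  have hconj : c *' ((cᵀ *' (e *' c)) *' cᵀ) = (c *' cᵀ) *' e := by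
    rw [← W.mul_assoc c (cᵀ *' (e *' c)) (cᵀ), hck, W.mul_assoc e c (cᵀ),
        ← W.mul_idem_comm_s11 he (W.hidem' c)]
  have h := W.S1 c (cᵀ *' (e *' c))
  rw [W.B1 c (cᵀ *' (e *' c)), ← W.W3 hk c, hconj, hck] at h
  exact h.symm

lemma pair {e f : S} (he : e *' e = e) (hf : f *' f = f) : e *' f = e +' f := by
  have hea : e +' e = e := W.addIdem_of_mulIdem he
  have hfa : f +' f = f := W.addIdem_of_mulIdem hf
  have nege : -'e = e := W.negIdem_of_mulIdem he
  have negf : -'f = f := W.negIdem_of_mulIdem hf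
  have haa : (e +' f) +' (e +' f) = e +' f := W.add_idem_closed hea hfa
  have ham : (e +' f) *' (e +' f) = e +' f := W.mulIdem_of_addIdem haa
  have hai : (e +' f)ᵀ = e +' f := W.idem_inv_s11 ham
  have hnega : -'(e +' f) = e +' f := W.idem_neg_s11 haa
  have hco : f *' e = e *' f := W.mul_idem_comm_s11 he hf
  have step2 : e *' (e +' f) = (e +' f) +' (e +' f) *' e := by
    have h := W.S3 he (e +' f)
    rw [hai, ham] at h; exact h
  have step1 : e *' (e +' f) = e *' f := by
    rw [W.distrib e e f, he, nege, hea, W.B6 he f]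
  have h5 : (e +' f) *' e = (e +' f) +' ((e +' f) *' e +' (e +' f)) := by
    have h := W.B5 (e +' f) e
    rw [hnega, W.aabs haa, haa] at h
    exact h
  have habs1 : (e +' f) +' (e +' f) *' e = (e +' f) *' e := by
    conv_lhs => rw [h5]
    rw [W.aabs haa]; exact h5.symm
  have hs2 : (e +' f) *' e = e *' f := by rw [← habs1, ← step2, step1]
  have step2f : f *' (e +' f) = (e +' f) +' (e +' f) *' f := by
    have h := W.S3 hf (e +' f); rw [hai, ham] at h; exact h
  have step1f : f *' (e +' f) = e *' f := by
    rw [W.distrib f e f, hf, negf, W.add_assoc (f *' e) f f, hfa, W.B6R hf e, hco]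
  have h5f : (e +' f) *' f = (e +' f) +' ((e +' f) *' f +' (e +' f)) := by
    have h := W.B5 (e +' f) f
    rw [hnega, W.aabs haa, haa] at h; exact h
  have habs1f : (e +' f) +' (e +' f) *' f = (e +' f) *' f := by
    conv_lhs => rw [h5f]
    rw [W.aabs haa]; exact h5f.symm
  have hs2f : (e +' f) *' f = e *' f := by rw [← habs1f, ← step2f, step1f]
  have h4 : e +' f = (e *' f +' (e +' f)) +' e *' f := by
    conv_lhs => rw [← ham]
    rw [W.distrib (e +' f) e f, hnega, hs2, hs2f]
  have h5R : (e +' f) *' e +' (e +' f) = (e +' f) *' e := by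
    have h := W.B5R (e +' f) e
    rw [hnega, haa] at h; exact h
  have step5 : e *' f +' (e +' f) = e *' f := by rw [← hs2]; exact h5R
  have hsm : (e *' f) *' (e *' f) = e *' f := by
    simp only [W.mul_assoc]
    rw [← W.mul_assoc f e f, hco, W.mul_assoc e f f, hf, W.mabs he f]
  have hsa : e *' f +' e *' f = e *' f := W.addIdem_of_mulIdem hsm
  rw [h4, step5, hsa]

lemma T1 {e : S} (he : e *' e = e) (c : S) : e *' c = c +' e := by
  rw [W.S3 he c, W.pair (W.hidem' c) he, W.mul_inv_eq c,
      ← W.add_assoc c (-'c +' c) e, ← W.add_assoc c (-'c) c, W.add_neg_add c]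

lemma V (c : S) : (c +' -'c) *' c = c := by
  have hg : (c +' -'c) *' (c +' -'c) = c +' -'c := W.mulIdem_of_addIdem (W.gidem' c)
  rw [W.T1 hg c, W.T4 c, ← W.add_assoc c (-'c) c]
  exact W.add_neg_add c

lemma star (u c : S) : (-'u +' c) +' (-'u +' u) = -'u +' c := by
  have hXn : -'(-'u +' c) = -'c +' u := by rw [W.neg_add_s11, W.nn]
  have hgu : (-'u +' u) *' (-'u +' u) = -'u +' u := W.mulIdem_of_addIdem (W.gidem u)
  have hV := W.V (-'u +' c)
  rw [hXn] at hV
  have key1 : (-'u +' u) +' ((-'u +' c) +' (-'c +' u)) = (-'u +' c) +' (-'c +' u) := by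
    simp only [W.add_assoc]
    rw [← W.add_assoc u (-'u) (c +' (-'c +' u)),
        ← W.add_assoc (-'u) (u +' -'u) (c +' (-'c +' u)), W.nan u]
  have hδ : ((-'u +' c) +' (-'c +' u)) *' ((-'u +' c) +' (-'c +' u))
      = (-'u +' c) +' (-'c +' u) := by
    have h := W.gidem' (-'u +' c)
    rw [hXn] at h
    exact W.mulIdem_of_addIdem h
  have key2 : (-'u +' u) *' ((-'u +' c) +' (-'c +' u)) = (-'u +' c) +' (-'c +' u) := by
    rw [W.pair hgu hδ, key1]
  have h6 : (-'u +' u) *' (-'u +' c) = -'u +' c := by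
    conv_lhs => rw [← hV]
    rw [← W.mul_assoc (-'u +' u) ((-'u +' c) +' (-'c +' u)) (-'u +' c), key2, hV]
  rw [← W.T1 hgu (-'u +' c), h6]

lemma key (a b c : S) : bᵀ *' (aᵀ +' (b *' c)) = (bᵀ *' (aᵀ +' b)) +' c := by
  have hfW : bᵀ *' b = -'bᵀ +' bᵀ := by
    have h := W.mul_inv_eq (bᵀ); rw [W.ii] at h; exact h
  rw [W.distrib (bᵀ) (aᵀ) (b *' c), ← W.mul_assoc (bᵀ) b c, W.T1 (W.hidem b) c,
      W.distrib (bᵀ) (aᵀ) b, hfW,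
      W.add_assoc (bᵀ *' aᵀ) (-'bᵀ) (c +' (-'bᵀ +' bᵀ)),
      ← W.add_assoc (-'bᵀ) c (-'bᵀ +' bᵀ), W.star (bᵀ) c,
      ← W.T4 (bᵀ),
      W.add_assoc (bᵀ *' aᵀ) (-'bᵀ) (bᵀ +' -'bᵀ), W.nan (bᵀ),
      W.add_assoc (bᵀ *' aᵀ) (-'bᵀ) c]

lemma main (a b c : S) :
    (aᵀ +' b *' c)ᵀ *' (b *' c) = (((aᵀ +' b)ᵀ *' b)ᵀ +' c)ᵀ *' c := by
  have e1 : ((aᵀ +' b)ᵀ *' b)ᵀ = bᵀ *' (aᵀ +' b) := by rw [W.inv_mul_s11, W.ii]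
  have e2 : (bᵀ *' (aᵀ +' (b *' c)))ᵀ *' c = (aᵀ +' b *' c)ᵀ *' (b *' c) := by
    rw [W.inv_mul_s11, W.ii, W.mul_assoc]
  rw [e1, ← W.key a b c, e2]

end WeakBrace


theorem weakBrace_rho_antihom {S : Type*} (W : WeakBrace S) :
    ∀ a b c : S, W.mul (W.inv (W.add (W.inv a) (W.mul b c))) (W.mul b c)
      = W.mul (W.inv (W.add (W.inv (W.mul (W.inv (W.add (W.inv a) b)) b)) c)) c := by
  intro a b c
  exact W.main a b c
end

section
/- If (S,+,∘) is a weak brace and a +ᵒᵖ b := b + a, then (S, +ᵒᵖ, ∘) is again a weak brace (the opposite weak brace). -/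
namespace WeakBraceAux

variable {S : Type*} (W : WeakBrace S)

local infixl:65 " +. " => W.add
local infixl:70 " *. " => W.mul
local prefix:max "∸" => W.neg
local postfix:max "ⁱ" => W.inv

lemma neg_neg (a : S) : ∸∸a = a :=
  (W.neg_unique (∸a) a (W.neg_add_neg a) (W.add_neg_add a)).symm

lemma inv_inv (a : S) : (aⁱ)ⁱ = a :=
  (W.inv_unique (aⁱ) a (W.inv_mul_inv a) (W.mul_inv_mul a)).symm

lemma idem_neg (x : S) (h : x +. x = x) : ∸x = x :=
  (W.neg_unique x x (by rw [h, h]) (by rw [h, h])).symm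

/-- e := -a + a is idempotent -/
lemma e_idem (a : S) : (∸a +. a) +. (∸a +. a) = ∸a +. a := by
  rw [← W.add_assoc (∸a +. a) ∸a a, W.neg_add_neg]

/-- f := a - a is idempotent -/
lemma f_idem (a : S) : (a +. ∸a) +. (a +. ∸a) = a +. ∸a := by
  rw [← W.add_assoc (a +. ∸a) a ∸a, W.add_neg_add]

/-- sum of idempotents is idempotent -/
lemma idem_add (x y : S) (hx : x +. x = x) (hy : y +. y = y) :
    (x +. y) +. (x +. y) = x +. y := by
  set s := x +. y with hs
  set n := ∸s with hn
  have h1 : (s +. n) +. s = s := W.add_neg_add s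
  have h2 : (n +. s) +. n = n := W.neg_add_neg s
  -- claim: y + n + x = n
  have key : (y +. n) +. x = n := by
    apply W.neg_unique
    · -- s + ((y+n)+x) + s = s
      calc (s +. ((y +. n) +. x)) +. s
          = ((x +. ((y +. y) +. n)) +. ((x +. x) +. y)) := by
            simp only [hs, W.add_assoc]
        _ = (x +. (y +. n)) +. (x +. y) := by rw [hy, hx]
        _ = (s +. n) +. s := by simp only [hs, W.add_assoc]
        _ = s := h1
    · calc (((y +. n) +. x) +. s) +. ((y +. n) +. x)
          = y +. ((n +. ((x +. x) +. ((y +. y) +. n))) +. x) := by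
            simp only [hs, W.add_assoc]
        _ = y +. ((n +. (x +. (y +. n))) +. x) := by rw [hx, hy]
        _ = ((y +. ((n +. s) +. n)) +. x) := by simp only [hs, W.add_assoc]
        _ = (y +. n) +. x := by rw [h2, W.add_assoc]
  -- n is idempotent
  have nid : n +. n = n := by
    calc n +. n = ((y +. n) +. x) +. ((y +. n) +. x) := by rw [key]
      _ = y +. ((n +. ((x +. y) +. n)) +. x) := by simp only [W.add_assoc]
      _ = (y +. ((n +. s) +. n)) +. x := by simp only [hs, W.add_assoc]
      _ = (y +. n) +. x := by rw [h2, W.add_assoc]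
      _ = n := key
  -- s = neg n = n
  have hsn : s = n := by
    have : s = ∸n := W.neg_unique n s h2 h1
    rw [this, idem_neg W n nid]
  rw [hsn]; exact nid


lemma idem_comm (x y : S) (hx : x +. x = x) (hy : y +. y = y) : x +. y = y +. x := by
  have hxy := idem_add W x y hx hy
  have hyx := idem_add W y x hy hx
  have c1 : ((x +. y) +. (y +. x)) +. (x +. y) = x +. y := by
    calc ((x +. y) +. (y +. x)) +. (x +. y)
        = x +. ((y +. y) +. ((x +. x) +. y)) := by simp only [W.add_assoc]
      _ = x +. (y +. (x +. y)) := by rw [hy, hx]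
      _ = (x +. y) +. (x +. y) := by simp only [W.add_assoc]
      _ = x +. y := hxy
  have c2 : ((y +. x) +. (x +. y)) +. (y +. x) = y +. x := by
    calc ((y +. x) +. (x +. y)) +. (y +. x)
        = y +. ((x +. x) +. ((y +. y) +. x)) := by simp only [W.add_assoc]
      _ = y +. (x +. (y +. x)) := by rw [hx, hy]
      _ = (y +. x) +. (y +. x) := by simp only [W.add_assoc]
      _ = y +. x := hyx
  have : y +. x = ∸(x +. y) := W.neg_unique (x +. y) (y +. x) c1 c2
  rw [this, idem_neg W _ hxy]

lemma inv_mul_self (a : S) : aⁱ *. a = ∸(aⁱ) +. aⁱ := by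
  have := W.mul_inv_eq (aⁱ); rwa [inv_inv] at this

lemma eq4 (a : S) : ((a *. ∸(aⁱ)) +. ∸a) +. (∸a +. a) = a := by
  have h1 : a *. (aⁱ *. a) = a := by rw [← W.mul_assoc, W.mul_inv_mul]
  rw [inv_mul_self, W.distrib, W.mul_inv_eq] at h1
  exact h1

lemma nan' (a z : S) : ∸a +. (a +. (∸a +. z)) = ∸a +. z := by
  have h : ((∸a +. a) +. ∸a) +. z = ∸a +. z := by rw [W.neg_add_neg]
  simpa only [W.add_assoc] using h

lemma eq25 (a x : S) :
    a +. ((a *. aⁱ) *. x) = ((a *. ∸(aⁱ)) +. ∸a) +. ((a *. aⁱ) *. x) := by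
  have negE : ∸(a *. aⁱ) = a *. aⁱ := by
    rw [W.mul_inv_eq]; exact idem_neg W _ (e_idem W a)
  have absorb : a +. (a *. aⁱ) = a := by
    rw [W.mul_inv_eq, ← W.add_assoc, W.add_neg_add]
  have r1 : (a *. aⁱ) *. (a +. x) = a +. ((a *. aⁱ) *. x) := by
    rw [W.distrib, W.mul_inv_mul, negE, W.add_assoc, ← W.add_assoc a, absorb]
  have r2a : aⁱ *. (a +. x) = ∸(aⁱ) +. (aⁱ *. x) := by
    rw [W.distrib, inv_mul_self, W.neg_add_neg]
  have r2 : (a *. aⁱ) *. (a +. x) = ((a *. ∸(aⁱ)) +. ∸a) +. ((a *. aⁱ) *. x) := by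
    rw [W.mul_assoc, r2a, W.distrib, W.mul_assoc]
  rw [← r1, r2]

lemma eq27 (a : S) : a +. a = ((a *. ∸(aⁱ)) +. ∸a) +. a := by
  have h := eq25 W a a
  rwa [W.mul_inv_mul] at h

lemma eq29 (a : S) : (((a +. a) +. ∸a) +. ∸a) +. a = a := by
  have e4 : (a *. ∸(aⁱ)) +. (∸a +. (∸a +. a)) = a := by
    simpa only [W.add_assoc] using eq4 W a
  calc (((a +. a) +. ∸a) +. ∸a) +. a
      = ((((((a *. ∸(aⁱ)) +. ∸a) +. a) +. ∸a) +. ∸a) +. a) := by rw [eq27 W a]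
    _ = (a *. ∸(aⁱ)) +. (∸a +. (a +. (∸a +. (∸a +. a)))) := by simp only [W.add_assoc]
    _ = (a *. ∸(aⁱ)) +. (∸a +. (∸a +. a)) := by rw [nan' W a (∸a +. a)]
    _ = a := e4

lemma fef (a : S) : a +. (∸a +. (∸a +. (a +. (a +. ∸a)))) = a +. ∸a := by
  have h30 : (((∸a +. ∸a) +. a) +. a) +. ∸a = ∸a := by
    have := eq29 W (∸a); rwa [neg_neg] at this
  calc a +. (∸a +. (∸a +. (a +. (a +. ∸a))))
      = a +. ((((∸a +. ∸a) +. a) +. a) +. ∸a) := by simp only [W.add_assoc]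
    _ = a +. ∸a := by rw [h30]

lemma add_comm_neg (a : S) : ∸a +. a = a +. ∸a := by
  have hef : (∸a +. a) +. (a +. ∸a) = (a +. ∸a) +. (∸a +. a) :=
    idem_comm W _ _ (e_idem W a) (f_idem W a)
  have hfef : ((a +. ∸a) +. (∸a +. a)) +. (a +. ∸a) = a +. ∸a := by
    simpa only [W.add_assoc] using fef W a
  have hefe : ((∸a +. a) +. (a +. ∸a)) +. (∸a +. a) = ∸a +. a := by
    have := fef W (∸a); rw [neg_neg] at this
    simpa only [W.add_assoc] using this
  have h1 : (a +. ∸a) +. (∸a +. a) = a +. ∸a := by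
    calc (a +. ∸a) +. (∸a +. a)
        = ((a +. ∸a) +. (a +. ∸a)) +. (∸a +. a) := by rw [f_idem]
      _ = (a +. ∸a) +. ((a +. ∸a) +. (∸a +. a)) := W.add_assoc _ _ _
      _ = (a +. ∸a) +. ((∸a +. a) +. (a +. ∸a)) := by rw [hef]
      _ = ((a +. ∸a) +. (∸a +. a)) +. (a +. ∸a) := (W.add_assoc _ _ _).symm
      _ = a +. ∸a := hfef
  have h2 : (∸a +. a) +. (a +. ∸a) = ∸a +. a := by
    calc (∸a +. a) +. (a +. ∸a)
        = ((∸a +. a) +. (∸a +. a)) +. (a +. ∸a) := by rw [e_idem]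
      _ = (∸a +. a) +. ((∸a +. a) +. (a +. ∸a)) := W.add_assoc _ _ _
      _ = (∸a +. a) +. ((a +. ∸a) +. (∸a +. a)) := by rw [← hef]
      _ = ((∸a +. a) +. (a +. ∸a)) +. (∸a +. a) := (W.add_assoc _ _ _).symm
      _ = ∸a +. a := hefe
  calc ∸a +. a = (∸a +. a) +. (a +. ∸a) := h2.symm
    _ = (a +. ∸a) +. (∸a +. a) := hef
    _ = a +. ∸a := h1

lemma clifford (a : S) : a *. aⁱ = a +. ∸a := by
  rw [W.mul_inv_eq, add_comm_neg]

end WeakBraceAux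


theorem weakBrace_opposite {S : Type*} (W : WeakBrace S) :
    ∃ W' : WeakBrace S, (∀ a b : S, W'.add a b = W.add b a) ∧ W'.mul = W.mul ∧
      W'.neg = W.neg ∧ W'.inv = W.inv := by
  refine ⟨{
    add := fun a b => W.add b a
    mul := W.mul
    neg := W.neg
    inv := W.inv
    add_assoc := fun a b c => (W.add_assoc c b a).symm
    mul_assoc := W.mul_assoc
    add_neg_add := fun a => by
      show W.add a (W.add (W.neg a) a) = a
      rw [← W.add_assoc]; exact W.add_neg_add a
    neg_add_neg := fun a => by
      show W.add (W.neg a) (W.add a (W.neg a)) = W.neg a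
      rw [← W.add_assoc]; exact W.neg_add_neg a
    neg_unique := fun a x h1 h2 => by
      refine W.neg_unique a x ?_ ?_
      · rw [W.add_assoc]; exact h1
      · rw [W.add_assoc]; exact h2
    mul_inv_mul := W.mul_inv_mul
    inv_mul_inv := W.inv_mul_inv
    inv_unique := W.inv_unique
    distrib := fun a b c => by
      show W.mul a (W.add c b) = W.add (W.mul a c) (W.add (W.neg a) (W.mul a b))
      rw [W.distrib a c b, W.add_assoc]
    mul_inv_eq := fun a => WeakBraceAux.clifford W a }, fun a b => rfl, rfl, rfl, rfl⟩
end
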